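/- Let n, m ∈ ℕ, let S, T ∈ {0,1}^{m×n} be binary matrices, and let R ∈ {0,1}^{n×n} be a symmetric binary matrix with R ≥ I_n. Then the sparsity-invariance property [for every Y ∈ Sparse(T) and every invertible X ∈ Sparse(R), the matrix YX⁻¹ belongs to Sparse(S)] holds if and only if T ≤ S and TR^{n−1} ≤ S (with the product and power taken structurally). -/

import Mathlib

open Matrix

/-- Structural product of binary (Boolean) matrices:
`(sprod X Z) i j = true` iff `∃ k, X i k = true ∧ Z k j = true`. -/
def sprod {m n p : ℕ} (X : Matrix (Fin m) (Fin n) Bool) (Z : Matrix (Fin n) (Fin p) Bool) :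
    Matrix (Fin m) (Fin p) Bool :=
  Matrix.of fun i j => decide (∃ k, X i k = true ∧ Z k j = true)

/-- Structural power of a binary matrix, with `spow R 0 = I`. -/
def spow {n : ℕ} (R : Matrix (Fin n) (Fin n) Bool) : ℕ → Matrix (Fin n) (Fin n) Bool
  | 0 => Matrix.of fun i j => decide (i = j)
  | k + 1 => sprod (spow R k) R

/-- `Y` belongs to the sparsity subspace `Sparse(X)`. -/
def InSparse {m n : ℕ} (X : Matrix (Fin m) (Fin n) Bool) (Y : Matrix (Fin m) (Fin n) ℝ) : Prop :=
  ∀ i j, X i j = false → Y i j = 0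

/-- The binary matrix encoding the sparsity pattern of a real matrix. -/
noncomputable def Struct {m n : ℕ} (Y : Matrix (Fin m) (Fin n) ℝ) : Matrix (Fin m) (Fin n) Bool :=
  Matrix.of fun i j => decide (Y i j ≠ 0)

/-- Entrywise order on binary matrices: `leB X X'` means `X ≤ X'`. -/
def leB {m n : ℕ} (X X' : Matrix (Fin m) (Fin n) Bool) : Prop :=
  ∀ i j, X i j = true → X' i j = true

lemma sprod_true_iff {m n p : ℕ} (X : Matrix (Fin m) (Fin n) Bool)
    (Z : Matrix (Fin n) (Fin p) Bool) (i : Fin m) (j : Fin p) :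
    sprod X Z i j = true ↔ ∃ k, X i k = true ∧ Z k j = true := by
  simp [sprod]

lemma InSparse_mul {m n p : ℕ} {A : Matrix (Fin m) (Fin n) Bool} {B : Matrix (Fin n) (Fin p) Bool}
    {Y : Matrix (Fin m) (Fin n) ℝ} {Z : Matrix (Fin n) (Fin p) ℝ}
    (hY : InSparse A Y) (hZ : InSparse B Z) : InSparse (sprod A B) (Y * Z) := by
  intro i j hij
  rw [Matrix.mul_apply]
  apply Finset.sum_eq_zero
  intro k _
  have hnot : ¬ (A i k = true ∧ B k j = true) := by
    intro hc
    have := (sprod_true_iff A B i j).mpr ⟨k, hc⟩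
    rw [hij] at this
    exact absurd this (by simp)
  by_cases hA : A i k = true
  · have hB : B k j = false := by
      cases hBkj : B k j
      · rfl
      · exact absurd ⟨hA, hBkj⟩ hnot
    rw [hZ k j hB, mul_zero]
  · rw [hY i k (by simpa using hA), zero_mul]

lemma InSparse_pow {n : ℕ} {R : Matrix (Fin n) (Fin n) Bool} {X : Matrix (Fin n) (Fin n) ℝ}
    (hX : InSparse R X) : ∀ k, InSparse (spow R k) (X ^ k)
  | 0 => by
      intro i j hij
      have hne : i ≠ j := by simpa [spow] using hij
      simp [pow_zero, Matrix.one_apply_ne hne]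
  | k + 1 => by
      rw [pow_succ]
      exact InSparse_mul (InSparse_pow hX k) hX

lemma spow_mono {n : ℕ} {R : Matrix (Fin n) (Fin n) Bool} (hdiag : ∀ i, R i i = true)
    {k l : ℕ} (hkl : k ≤ l) {i j : Fin n} (h : spow R k i j = true) : spow R l i j = true := by
  induction l, hkl using Nat.le_induction with
  | base => exact h
  | succ l hl ih =>
      exact (sprod_true_iff _ _ _ _).mpr ⟨j, ih, hdiag j⟩

lemma spow_rtg {n : ℕ} {R : Matrix (Fin n) (Fin n) Bool} :
    ∀ (k : ℕ) {i j : Fin n}, spow R k i j = true →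
      Relation.ReflTransGen (fun a b => R a b = true) i j
  | 0, i, j, h => by
      have : i = j := by simpa [spow] using h
      exact this ▸ Relation.ReflTransGen.refl
  | k + 1, i, j, h => by
      obtain ⟨c, h1, h2⟩ := (sprod_true_iff _ _ _ _).mp h
      exact (spow_rtg k h1).tail h2

lemma rtg_path {α : Type*} {r : α → α → Prop} {k j : α}
    (h : Relation.ReflTransGen r k j) :
    ∃ (L : ℕ) (v : ℕ → α), v 0 = k ∧ v L = j ∧ (∀ t, t < L → r (v t) (v (t + 1))) ∧
      (∀ s, s ≤ L → ∀ t, t ≤ L → v s = v t → s = t) := by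
  induction h with
  | refl => exact ⟨0, fun _ => k, rfl, rfl, by omega, by omega⟩
  | @tail b c hkb hbc ih =>
      obtain ⟨L, v, hv0, hvL, hedge, hinj⟩ := ih
      by_cases hc : ∃ s, s ≤ L ∧ v s = c
      · obtain ⟨s, hs, hvs⟩ := hc
        exact ⟨s, v, hv0, hvs, fun t ht => hedge t (by omega),
          fun a ha b hb => hinj a (by omega) b (by omega)⟩
      · push_neg at hc
        refine ⟨L + 1, fun t => if t ≤ L then v t else c, by simp [hv0], by simp, ?_, ?_⟩
        · intro t ht
          by_cases h1 : t + 1 ≤ L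
          · have h2 : t ≤ L := by omega
            simp only [if_pos h1, if_pos h2]
            exact hedge t (by omega)
          · have h2 : t = L := by omega
            simp only [h2, if_pos (le_refl L), if_neg (show ¬ (L + 1 ≤ L) by omega), hvL]
            exact hbc
        · intro a ha b hb hab
          by_cases h1 : a ≤ L <;> by_cases h2 : b ≤ L
          · simp only [if_pos h1, if_pos h2] at hab
            exact hinj a h1 b h2 hab
          · simp only [if_pos h1, if_neg h2] at hab
            exact absurd hab (hc a h1)
          · simp only [if_neg h1, if_pos h2] at hab
            exact absurd hab.symm (hc b h2)
          · omega

lemma inv_sparse {n : ℕ} {R : Matrix (Fin n) (Fin n) Bool} {X : Matrix (Fin n) (Fin n) ℝ}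
    (hdiag : ∀ i, R i i = true) (hXu : IsUnit X) (hs : InSparse R X) :
    InSparse (spow R (n - 1)) X⁻¹ := by
  classical
  have hdet : IsUnit X.det := (Matrix.isUnit_iff_isUnit_det X).mp hXu
  set c : ℕ → ℝ := fun i => X.charpoly.coeff i with hc
  have hc0 : c 0 ≠ 0 := by
    intro h0
    have hdet_eq : X.det = (-1) ^ Fintype.card (Fin n) * X.charpoly.coeff 0 :=
      Matrix.det_eq_sign_charpoly_coeff X
    rw [show X.charpoly.coeff 0 = c 0 from rfl, h0, mul_zero] at hdet_eq
    exact hdet.ne_zero hdet_eq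
  have hCH : ∑ i ∈ Finset.range (n + 1), c i • X ^ i = 0 := by
    have h1 := Matrix.aeval_self_charpoly X
    rw [Polynomial.aeval_eq_sum_range] at h1
    rwa [Matrix.charpoly_natDegree_eq_dim, Fintype.card_fin] at h1
  set B : Matrix (Fin n) (Fin n) ℝ :=
    (-(c 0)⁻¹) • ∑ i ∈ Finset.range n, c (i + 1) • X ^ i with hB
  have hsum : ∑ i ∈ Finset.range n, c (i + 1) • X ^ (i + 1) = -(c 0 • (1 : Matrix (Fin n) (Fin n) ℝ)) := by
    have := Finset.sum_range_succ' (fun i => c i • X ^ i) n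
    rw [hCH] at this
    rw [pow_zero] at this
    exact eq_neg_of_add_eq_zero_left this.symm
  have hXB : X * B = 1 := by
    rw [hB, Matrix.mul_smul, Finset.mul_sum]
    have : ∀ i, X * (c (i + 1) • X ^ i) = c (i + 1) • X ^ (i + 1) := by
      intro i
      rw [Matrix.mul_smul, ← pow_succ']
    simp only [this]
    rw [hsum, smul_neg, smul_smul, neg_mul, neg_smul, neg_neg, inv_mul_cancel₀ hc0, one_smul]
  have hinv : X⁻¹ = B := Matrix.inv_eq_right_inv hXB
  intro k j hkj
  rw [hinv, hB, Matrix.smul_apply, Matrix.sum_apply]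
  have hterm : ∀ i ∈ Finset.range n, (c (i + 1) • X ^ i) k j = 0 := by
    intro i hi
    rw [Matrix.smul_apply]
    have hXi : (X ^ i) k j = 0 := by
      apply InSparse_pow hs i
      cases hsp : spow R i k j
      · rfl
      · exfalso
        have := spow_mono hdiag (show i ≤ n - 1 by
          have := Finset.mem_range.mp hi; omega) hsp
        rw [hkj] at this
        exact absurd this (by simp)
    rw [hXi, smul_zero]
  rw [Finset.sum_eq_zero hterm, smul_zero]

/-- Theorem 1, 1 ⇔ 2: sparsity invariance holds iff
`T ≤ S` and `T R^{n-1} ≤ S` (structural product/power). -/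
theorem sparsity_invariance_characterization {m n : ℕ}
    (S T : Matrix (Fin m) (Fin n) Bool) (R : Matrix (Fin n) (Fin n) Bool)
    (hsym : ∀ i j, R i j = R j i) (hdiag : ∀ i, R i i = true) :
    (∀ (Y : Matrix (Fin m) (Fin n) ℝ) (X : Matrix (Fin n) (Fin n) ℝ),
        InSparse T Y → IsUnit X → InSparse R X → InSparse S (Y * X⁻¹)) ↔
      (leB T S ∧ leB (sprod T (spow R (n - 1))) S) := by
  classical
  constructor
  · intro H
    constructor
    · -- T ≤ S
      intro i j hT
      set Y : Matrix (Fin m) (Fin n) ℝ :=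
        Matrix.of (fun a b => if a = i ∧ b = j then (1 : ℝ) else 0) with hYdef
      have hY : InSparse T Y := by
        intro a b hab
        simp only [hYdef, Matrix.of_apply]
        rw [if_neg]
        rintro ⟨rfl, rfl⟩
        rw [hT] at hab
        exact absurd hab (by simp)
      have hR1 : InSparse R (1 : Matrix (Fin n) (Fin n) ℝ) := by
        intro a b hab
        have hne : a ≠ b := by
          rintro rfl
          rw [hdiag] at hab
          exact absurd hab (by simp)
        exact Matrix.one_apply_ne hne
      have hres := H Y 1 hY isUnit_one hR1
      rw [inv_one, Matrix.mul_one] at hres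
      cases hS : S i j
      · exfalso
        have := hres i j hS
        simp [hYdef] at this
      · rfl
    · -- T R^{n-1} ≤ S
      intro i j hTR
      obtain ⟨k, hTik, hRkj⟩ := (sprod_true_iff _ _ i j).mp hTR
      obtain ⟨L, v, hv0, hvL, hedge, hinj⟩ := rtg_path (spow_rtg (n - 1) hRkj)
      set N : Matrix (Fin n) (Fin n) ℝ :=
        Matrix.of (fun a b => if ∃ t, t < L ∧ a = v t ∧ b = v (t + 1) then (1 : ℝ) else 0)
        with hNdef
      set P : Matrix (Fin n) (Fin n) ℝ :=
        Matrix.of (fun a b => if ∃ s t, s < t ∧ t ≤ L ∧ a = v s ∧ b = v t then (1 : ℝ) else 0)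
        with hPdef
      have key : P = N + N * P := by
        ext a b
        rw [Matrix.add_apply, Matrix.mul_apply]
        by_cases ha : ∃ t₀, t₀ < L ∧ a = v t₀
        · obtain ⟨t₀, ht₀, hat₀⟩ := ha
          have hNa : ∀ cc, N a cc = if cc = v (t₀ + 1) then (1 : ℝ) else 0 := by
            intro cc
            simp only [hNdef, Matrix.of_apply]
            by_cases hcc : cc = v (t₀ + 1)
            · rw [if_pos ⟨t₀, ht₀, hat₀, hcc⟩, if_pos hcc]
            · rw [if_neg, if_neg hcc]
              rintro ⟨t, ht, hat, hct⟩
              have hvv : v t = v t₀ := by rw [← hat, ← hat₀]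
              have : t = t₀ := hinj t (by omega) t₀ (by omega) hvv
              exact hcc (this ▸ hct)
          have hsum : ∑ cc, N a cc * P cc b = P (v (t₀ + 1)) b := by
            rw [Finset.sum_eq_single (v (t₀ + 1))]
            · rw [hNa, if_pos rfl, one_mul]
            · intro cc _ hcc
              rw [hNa, if_neg hcc, zero_mul]
            · intro habs
              exact absurd (Finset.mem_univ _) habs
          rw [hsum, hNa b, hat₀]
          by_cases hb : b = v (t₀ + 1)
          · subst hb
            have h1 : P (v t₀) (v (t₀ + 1)) = 1 := by
              simp only [hPdef, Matrix.of_apply]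
              exact if_pos ⟨t₀, t₀ + 1, by omega, by omega, rfl, rfl⟩
            have h2 : P (v (t₀ + 1)) (v (t₀ + 1)) = 0 := by
              simp only [hPdef, Matrix.of_apply]
              rw [if_neg]
              rintro ⟨s, t, hst, htL, hs, ht⟩
              have hs' : s = t₀ + 1 := (hinj (t₀+1) (by omega) s (by omega) hs).symm
              have ht' : t = t₀ + 1 := (hinj (t₀+1) (by omega) t (by omega) ht).symm
              omega
            rw [h1, h2, if_pos rfl, add_zero]
          · rw [if_neg hb, zero_add]
            simp only [hPdef, Matrix.of_apply]
            apply if_congr _ rfl rfl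
            constructor
            · rintro ⟨s, t, hst, htL, hs, ht⟩
              have hs' : s = t₀ := (hinj t₀ (by omega) s (by omega) hs).symm
              have htne : t ≠ t₀ + 1 := by
                rintro rfl
                exact hb ht
              exact ⟨t₀ + 1, t, by omega, htL, rfl, ht⟩
            · rintro ⟨s, t, hst, htL, hs, ht⟩
              have hs' : s = t₀ + 1 := (hinj (t₀+1) (by omega) s (by omega) hs).symm
              exact ⟨t₀, t, by omega, htL, rfl, ht⟩
        · have hNa : ∀ cc, N a cc = 0 := by
            intro cc
            simp only [hNdef, Matrix.of_apply]
            rw [if_neg]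
            rintro ⟨t, ht, hat, -⟩
            exact ha ⟨t, ht, hat⟩
          have hPa : P a b = 0 := by
            simp only [hPdef, Matrix.of_apply]
            rw [if_neg]
            rintro ⟨s, t, hst, htL, hs, -⟩
            exact ha ⟨s, by omega, hs⟩
          rw [hPa, hNa]
          rw [Finset.sum_eq_zero (fun cc _ => by rw [hNa, zero_mul]), add_zero]
      have hinvmul : (1 - N) * (1 + P) = 1 := by
        have expand : (1 - N) * (1 + P) = 1 + (P - (N + N * P)) := by noncomm_ring
        rw [expand, ← key, sub_self, add_zero]
      have hdetu : IsUnit (1 - N) := by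
        rw [Matrix.isUnit_iff_isUnit_det]
        apply IsUnit.of_mul_eq_one (1 + P).det
        rw [← Matrix.det_mul, hinvmul, Matrix.det_one]
      have hinv_eq : (1 - N)⁻¹ = 1 + P := Matrix.inv_eq_right_inv hinvmul
      have hXsp : InSparse R (1 - N) := by
        intro a b hab
        have hne : a ≠ b := by
          rintro rfl
          rw [hdiag] at hab
          exact absurd hab (by simp)
        rw [Matrix.sub_apply, Matrix.one_apply_ne hne]
        have hN0 : N a b = 0 := by
          simp only [hNdef, Matrix.of_apply]
          rw [if_neg]
          rintro ⟨t, ht, rfl, rfl⟩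
          rw [hedge t ht] at hab
          exact absurd hab (by simp)
        rw [hN0, sub_zero]
      set Y : Matrix (Fin m) (Fin n) ℝ :=
        Matrix.of (fun a b => if a = i ∧ b = k then (1 : ℝ) else 0) with hYdef
      have hY : InSparse T Y := by
        intro a b hab
        simp only [hYdef, Matrix.of_apply]
        rw [if_neg]
        rintro ⟨rfl, rfl⟩
        rw [hTik] at hab
        exact absurd hab (by simp)
      have hres := H Y (1 - N) hY hdetu hXsp
      rw [hinv_eq] at hres
      have hYP : (Y * (1 + P) : Matrix (Fin m) (Fin n) ℝ) i j = (1 + P) k j := by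
        rw [Matrix.mul_apply, Finset.sum_eq_single k]
        · simp [hYdef]
        · intro cc _ hcc
          have : Y i cc = 0 := by
            simp only [hYdef, Matrix.of_apply]
            exact if_neg (fun h => hcc h.2)
          rw [this, zero_mul]
        · intro habs
          exact absurd (Finset.mem_univ _) habs
      have hval : (1 + P) k j = 1 := by
        rcases Nat.eq_zero_or_pos L with hL | hL
        · have hkj : k = j := by rw [← hv0, ← hvL, hL]
          subst hkj
          have hPkk : P k k = 0 := by
            simp only [hPdef, Matrix.of_apply]
            rw [if_neg]
            rintro ⟨s, t, hst, htL, -, -⟩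
            omega
          rw [Matrix.add_apply, hPkk, Matrix.one_apply_eq, add_zero]
        · have hkj : k ≠ j := by
            rw [← hv0, ← hvL]
            intro h
            have := hinj 0 (by omega) L le_rfl h
            omega
          have hPkj : P k j = 1 := by
            simp only [hPdef, Matrix.of_apply]
            exact if_pos ⟨0, L, hL, le_rfl, hv0.symm, hvL.symm⟩
          rw [Matrix.add_apply, hPkj, Matrix.one_apply_ne hkj, zero_add]
      cases hS : S i j
      · exfalso
        have := hres i j hS
        rw [hYP, hval] at this
        exact one_ne_zero this
      · rfl
  · rintro ⟨hTS, hTRS⟩ Y X hY hXu hXR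
    intro i j hSij
    have hfalse : sprod T (spow R (n - 1)) i j = false := by
      cases h : sprod T (spow R (n - 1)) i j
      · rfl
      · rw [hTRS i j h] at hSij
        exact absurd hSij (by simp)
    exact InSparse_mul hY (inv_sparse hdiag hXu hXR) i j hfalse
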